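/- arXiv:1307.6226 — 2 statements merged into one kernel-verified Lean document; each statement's English description precedes it below -/
import Mathlib

section
/- Fix n ≥ 3. Suppose for 1 ≤ i ≤ m we are given nontrivial subspaces Vᵢ, Wᵢ ⊆ 𝔽₂ⁿ with 𝔽₂ⁿ = Vᵢ ⊕ Wᵢ. Then there exists a linear map f : 𝔽₂ⁿ → 𝔽₂ such that the set {i : f|_{Vᵢ} ≠ 0 and f|_{Wᵢ} ≠ 0} has cardinality at least (3/7)·m. -/
open Finset Module

open scoped Classical

noncomputable instance instDualFintype (n : ℕ) :
    Fintype ((Fin n → ZMod 2) →ₗ[ZMod 2] ZMod 2) :=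
  @Fintype.ofFinite _ (Finite.of_injective
    (fun f => (f : (Fin n → ZMod 2) → ZMod 2)) DFunLike.coe_injective)

lemma aux_arith {x y : ℕ} (hx : 1 ≤ x) (hy : 1 ≤ y) :
    x * 2 + y * 2 ≤ x * y * 2 + 2 := by nlinarith

lemma aux_pow_bound {a b n : ℕ} (ha : 1 ≤ a) (hb : 1 ≤ b) (hab : a + b = n) :
    2 ^ a + 2 ^ b ≤ 2 ^ (n - 1) + 2 := by
  obtain ⟨a', rfl⟩ : ∃ a', a = a' + 1 := ⟨a - 1, by omega⟩
  obtain ⟨b', rfl⟩ : ∃ b', b = b' + 1 := ⟨b - 1, by omega⟩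
  have h1 : n - 1 = a' + b' + 1 := by omega
  have e1 : (2:ℕ) ^ (a' + 1) = 2 ^ a' * 2 := pow_succ 2 a'
  have e2 : (2:ℕ) ^ (b' + 1) = 2 ^ b' * 2 := pow_succ 2 b'
  have e3 : (2:ℕ) ^ (a' + b' + 1) = 2 ^ a' * 2 ^ b' * 2 := by
    rw [pow_succ, pow_add]
  rw [h1, e1, e2, e3]
  exact aux_arith Nat.one_le_two_pow Nat.one_le_two_pow

lemma aux_cardD (n : ℕ) :
    Fintype.card ((Fin n → ZMod 2) →ₗ[ZMod 2] ZMod 2) = 2 ^ n := by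
  have h1 := card_eq_pow_finrank (K := ZMod 2)
    (V := (Fin n → ZMod 2) →ₗ[ZMod 2] ZMod 2)
  have h2 : finrank (ZMod 2) ((Fin n → ZMod 2) →ₗ[ZMod 2] ZMod 2) = n := by
    have h3 := Subspace.dual_finrank_eq (K := ZMod 2) (V := Fin n → ZMod 2)
    have h4 : finrank (ZMod 2) (Fin n → ZMod 2) = n := by
      simp [Module.finrank_pi]
    exact h3.trans h4
  rw [h1, h2, ZMod.card]

lemma count_good (n : ℕ) (hn : n ≥ 3) (V W : Submodule (ZMod 2) (Fin n → ZMod 2))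
    (hV : V ≠ ⊥) (hW : W ≠ ⊥) (hc : IsCompl V W) :
    2 ^ (n - 1) - 1 ≤ (Finset.univ.filter
      (fun f : (Fin n → ZMod 2) →ₗ[ZMod 2] ZMod 2 =>
        (∃ x ∈ V, f x ≠ 0) ∧ (∃ x ∈ W, f x ≠ 0))).card := by
  have hM : finrank (ZMod 2) (Fin n → ZMod 2) = n := by
    simp [Module.finrank_pi]
  have hab : finrank (ZMod 2) V + finrank (ZMod 2) W = n := by
    rw [Submodule.finrank_add_eq_of_isCompl hc, hM]
  have ha : 1 ≤ finrank (ZMod 2) V := by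
    rcases Nat.eq_zero_or_pos (finrank (ZMod 2) V) with h | h
    · exact absurd (Submodule.finrank_eq_zero.mp h) hV
    · exact h
  have hb : 1 ≤ finrank (ZMod 2) W := by
    rcases Nat.eq_zero_or_pos (finrank (ZMod 2) W) with h | h
    · exact absurd (Submodule.finrank_eq_zero.mp h) hW
    · exact h
  -- cardinality of annihilators
  have hAnn : ∀ (U : Submodule (ZMod 2) (Fin n → ZMod 2)),
      (Finset.univ.filter (fun f : (Fin n → ZMod 2) →ₗ[ZMod 2] ZMod 2 =>
        f ∈ U.dualAnnihilator)).card = 2 ^ (n - finrank (ZMod 2) U) := by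
    intro U
    have hfr : finrank (ZMod 2) U.dualAnnihilator = n - finrank (ZMod 2) U := by
      have e := LinearEquiv.finrank_eq (R := ZMod 2)
        (M := (Fin n → ZMod 2) ⧸ U) (N := {x // x ∈ U.dualAnnihilator})
        (Subspace.quotEquivAnnihilator U)
      have q := Submodule.finrank_quotient_add_finrank U
      rw [hM] at q
      omega
    have hc1 : Fintype.card U.dualAnnihilator = 2 ^ (n - finrank (ZMod 2) U) := by
      have h := card_eq_pow_finrank (K := ZMod 2) (V := U.dualAnnihilator)
      rw [h, hfr, ZMod.card]
    rw [← hc1, Fintype.card_subtype]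
  have hAV : (Finset.univ.filter (fun f : (Fin n → ZMod 2) →ₗ[ZMod 2] ZMod 2 =>
      f ∈ V.dualAnnihilator)).card = 2 ^ (finrank (ZMod 2) W) := by
    rw [hAnn V, show n - finrank (ZMod 2) V = finrank (ZMod 2) W from by omega]
  have hAW : (Finset.univ.filter (fun f : (Fin n → ZMod 2) →ₗ[ZMod 2] ZMod 2 =>
      f ∈ W.dualAnnihilator)).card = 2 ^ (finrank (ZMod 2) V) := by
    rw [hAnn W, show n - finrank (ZMod 2) W = finrank (ZMod 2) V from by omega]
  -- intersection of annihilators is {0}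
  have hinter : (Finset.univ.filter (fun f : (Fin n → ZMod 2) →ₗ[ZMod 2] ZMod 2 =>
      f ∈ V.dualAnnihilator ∧ f ∈ W.dualAnnihilator)).card = 1 := by
    have hbot : V.dualAnnihilator ⊓ W.dualAnnihilator = ⊥ := by
      rw [show V.dualAnnihilator ⊓ W.dualAnnihilator = (V ⊔ W).dualAnnihilator from
        (Submodule.dualAnnihilator_sup_eq V W).symm,
        hc.sup_eq_top, Submodule.dualAnnihilator_top]
    have hmem : ∀ f : (Fin n → ZMod 2) →ₗ[ZMod 2] ZMod 2,
        (f ∈ V.dualAnnihilator ∧ f ∈ W.dualAnnihilator) ↔ f = 0 := by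
      intro f
      rw [← Submodule.mem_inf, hbot, Submodule.mem_bot]
    simp only [hmem]
    rw [Finset.filter_eq' Finset.univ 0]
    simp
  -- union bound
  have hunion : (Finset.univ.filter (fun f : (Fin n → ZMod 2) →ₗ[ZMod 2] ZMod 2 =>
      f ∈ V.dualAnnihilator ∨ f ∈ W.dualAnnihilator)).card + 1
      = 2 ^ (finrank (ZMod 2) W) + 2 ^ (finrank (ZMod 2) V) := by
    have h := Finset.card_union_add_card_inter
      (Finset.univ.filter (fun f : (Fin n → ZMod 2) →ₗ[ZMod 2] ZMod 2 =>
        f ∈ V.dualAnnihilator))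
      (Finset.univ.filter (fun f : (Fin n → ZMod 2) →ₗ[ZMod 2] ZMod 2 =>
        f ∈ W.dualAnnihilator))
    rw [← Finset.filter_or, ← Finset.filter_and] at h
    rw [hAV, hAW, hinter] at h
    exact h
  -- good = not bad
  have hgood : (Finset.univ.filter
      (fun f : (Fin n → ZMod 2) →ₗ[ZMod 2] ZMod 2 =>
        (∃ x ∈ V, f x ≠ 0) ∧ (∃ x ∈ W, f x ≠ 0))) =
      (Finset.univ.filter (fun f : (Fin n → ZMod 2) →ₗ[ZMod 2] ZMod 2 =>
        ¬(f ∈ V.dualAnnihilator ∨ f ∈ W.dualAnnihilator))) := by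
    apply Finset.filter_congr
    intro f _
    simp only [Submodule.mem_dualAnnihilator]
    push_neg
    constructor
    · rintro ⟨⟨x, hx, hfx⟩, ⟨y, hy, hfy⟩⟩
      exact ⟨⟨x, hx, hfx⟩, ⟨y, hy, hfy⟩⟩
    · rintro ⟨⟨x, hx, hfx⟩, ⟨y, hy, hfy⟩⟩
      exact ⟨⟨x, hx, hfx⟩, ⟨y, hy, hfy⟩⟩
  have hsplit := Finset.card_filter_add_card_filter_not
    (s := (Finset.univ : Finset ((Fin n → ZMod 2) →ₗ[ZMod 2] ZMod 2)))
    (p := fun f => f ∈ V.dualAnnihilator ∨ f ∈ W.dualAnnihilator)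
  rw [Finset.card_univ, aux_cardD n] at hsplit
  rw [hgood]
  have hbound := aux_pow_bound ha hb hab
  have h2n : 2 ^ n = 2 * 2 ^ (n - 1) := by
    rw [← pow_succ']
    congr 1
    omega
  omega

theorem stmt_2 (n m : ℕ) (hn : n ≥ 3)
    (V W : Fin m → Submodule (ZMod 2) (Fin n → ZMod 2))
    (hV : ∀ i, V i ≠ ⊥) (hW : ∀ i, W i ≠ ⊥)
    (hcompl : ∀ i, IsCompl (V i) (W i)) :
    ∃ f : (Fin n → ZMod 2) →ₗ[ZMod 2] ZMod 2,
      7 * Nat.card {i : Fin m //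
          (∃ x ∈ V i, f x ≠ 0) ∧ (∃ x ∈ W i, f x ≠ 0)} ≥ 3 * m := by
  by_contra hcon
  push_neg at hcon
  have hcard : ∀ f : (Fin n → ZMod 2) →ₗ[ZMod 2] ZMod 2,
      Nat.card {i : Fin m // (∃ x ∈ V i, f x ≠ 0) ∧ (∃ x ∈ W i, f x ≠ 0)} =
      (Finset.univ.filter (fun i : Fin m =>
        (∃ x ∈ V i, f x ≠ 0) ∧ (∃ x ∈ W i, f x ≠ 0))).card := by
    intro f
    rw [Nat.card_eq_fintype_card, Fintype.card_subtype]
  have hm : 1 ≤ m := by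
    have := hcon 0
    omega
  -- double counting
  have hsum : ∑ i : Fin m, (Finset.univ.filter
        (fun f : (Fin n → ZMod 2) →ₗ[ZMod 2] ZMod 2 =>
          (∃ x ∈ V i, f x ≠ 0) ∧ (∃ x ∈ W i, f x ≠ 0))).card
      = ∑ f : (Fin n → ZMod 2) →ₗ[ZMod 2] ZMod 2,
        (Finset.univ.filter (fun i : Fin m =>
          (∃ x ∈ V i, f x ≠ 0) ∧ (∃ x ∈ W i, f x ≠ 0))).card := by
    simp_rw [Finset.card_filter]
    exact Finset.sum_comm
  have hlower : m * (2 ^ (n - 1) - 1) ≤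
      ∑ f : (Fin n → ZMod 2) →ₗ[ZMod 2] ZMod 2,
        (Finset.univ.filter (fun i : Fin m =>
          (∃ x ∈ V i, f x ≠ 0) ∧ (∃ x ∈ W i, f x ≠ 0))).card := by
    rw [← hsum]
    calc m * (2 ^ (n - 1) - 1) = ∑ _i : Fin m, (2 ^ (n - 1) - 1) := by
          simp [mul_comm]
      _ ≤ _ := Finset.sum_le_sum fun i _ =>
          count_good n hn (V i) (W i) (hV i) (hW i) (hcompl i)
  -- the zero functional contributes nothing
  have hzero : (Finset.univ.filter (fun i : Fin m =>
      (∃ x ∈ V i, (0 : (Fin n → ZMod 2) →ₗ[ZMod 2] ZMod 2) x ≠ 0) ∧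
      (∃ x ∈ W i, (0 : (Fin n → ZMod 2) →ₗ[ZMod 2] ZMod 2) x ≠ 0))).card = 0 := by
    simp
  have herase : ∑ f : (Fin n → ZMod 2) →ₗ[ZMod 2] ZMod 2,
      (Finset.univ.filter (fun i : Fin m =>
        (∃ x ∈ V i, f x ≠ 0) ∧ (∃ x ∈ W i, f x ≠ 0))).card
      = ∑ f ∈ Finset.univ.erase (0 : (Fin n → ZMod 2) →ₗ[ZMod 2] ZMod 2),
        (Finset.univ.filter (fun i : Fin m =>
          (∃ x ∈ V i, f x ≠ 0) ∧ (∃ x ∈ W i, f x ≠ 0))).card := by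
    rw [← Finset.add_sum_erase _ _ (Finset.mem_univ 0), hzero, zero_add]
  have hupper : 7 * ∑ f ∈ Finset.univ.erase (0 : (Fin n → ZMod 2) →ₗ[ZMod 2] ZMod 2),
      (Finset.univ.filter (fun i : Fin m =>
        (∃ x ∈ V i, f x ≠ 0) ∧ (∃ x ∈ W i, f x ≠ 0))).card
      ≤ (2 ^ n - 1) * (3 * m - 1) := by
    rw [Finset.mul_sum]
    have hle : ∀ f ∈ Finset.univ.erase (0 : (Fin n → ZMod 2) →ₗ[ZMod 2] ZMod 2),
        7 * (Finset.univ.filter (fun i : Fin m =>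
          (∃ x ∈ V i, f x ≠ 0) ∧ (∃ x ∈ W i, f x ≠ 0))).card ≤ 3 * m - 1 := by
      intro f _
      have h := hcon f
      rw [hcard f] at h
      omega
    calc ∑ f ∈ Finset.univ.erase (0 : (Fin n → ZMod 2) →ₗ[ZMod 2] ZMod 2),
          7 * (Finset.univ.filter (fun i : Fin m =>
            (∃ x ∈ V i, f x ≠ 0) ∧ (∃ x ∈ W i, f x ≠ 0))).card
        ≤ ∑ _f ∈ Finset.univ.erase (0 : (Fin n → ZMod 2) →ₗ[ZMod 2] ZMod 2),
            (3 * m - 1) := Finset.sum_le_sum hle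
      _ = (2 ^ n - 1) * (3 * m - 1) := by
          rw [Finset.sum_const, smul_eq_mul,
            Finset.card_erase_of_mem (Finset.mem_univ 0),
            Finset.card_univ, aux_cardD n]
  -- combine everything into a contradiction
  rw [herase] at hlower
  have hfinal : 7 * (m * (2 ^ (n - 1) - 1)) ≤ (2 ^ n - 1) * (3 * m - 1) :=
    le_trans (Nat.mul_le_mul_left 7 hlower) hupper
  have hp : 4 ≤ 2 ^ (n - 1) := by
    calc (4 : ℕ) = 2 ^ 2 := rfl
      _ ≤ 2 ^ (n - 1) := Nat.pow_le_pow_right (by norm_num) (by omega)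
  have h2n : 2 ^ n = 2 * 2 ^ (n - 1) := by
    rw [← pow_succ']
    congr 1
    omega
  rw [h2n] at hfinal
  obtain ⟨q, hq⟩ : ∃ q, 2 ^ (n - 1) = q + 4 := ⟨2 ^ (n - 1) - 4, by omega⟩
  obtain ⟨m', rfl⟩ : ∃ m', m = m' + 1 := ⟨m - 1, by omega⟩
  rw [hq] at hfinal
  have hkey : 7 * ((m' + 1) * (q + 3)) ≤ (2 * q + 7) * (3 * m' + 2) := by
    have hrw1 : (q + 4) - 1 = q + 3 := by omega
    have hrw2 : 2 * (q + 4) - 1 = 2 * q + 7 := by omega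
    have hrw3 : 3 * (m' + 1) - 1 = 3 * m' + 2 := by omega
    rw [hrw1, hrw2, hrw3] at hfinal
    exact hfinal
  nlinarith [hkey]
end

section
/- Let Γ_k ⊴ Γ_{k−1} ⊴ ⋯ ⊴ Γ₀ be a chain of groups with each [Γᵢ : Γ_{i+1}] = 2 for 0 ≤ i < k. Then there exists a subgroup Γ′ ≤ Γ_k with Γ′ ⊴ Γ₀ and [Γ₀ : Γ′] = 2^ℓ for some ℓ ≤ 2^k − 1. -/
open Subgroup

private lemma core_step {G : Type*} [Group G] (N D : Subgroup G) [hNn : N.Normal]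
    (hN2 : N.index = 2) (hDN : D ≤ N) (hDn : (D.subgroupOf N).Normal)
    (ℓ : ℕ) (hDi : (D.subgroupOf N).index = 2 ^ ℓ) :
    ∃ D' : Subgroup G, D' ≤ D ∧ D'.Normal ∧ ∃ m ≤ 2 * ℓ + 1, D'.index = 2 ^ m := by
  -- pick g ∉ N
  have hNne : N ≠ ⊤ := by
    intro h
    rw [h, Subgroup.index_top] at hN2
    omega
  obtain ⟨g, hg⟩ : ∃ g : G, g ∉ N := by
    by_contra h
    push_neg at h
    exact hNne (Subgroup.eq_top_iff' N |>.mpr h)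
  have hnotmul : ∀ a b : G, a ∉ N → b ∉ N → a * b ∈ N := fun a b ha hb =>
    (Subgroup.mul_mem_iff_of_index_two hN2).mpr (iff_of_false ha hb)
  have hginv : g⁻¹ ∉ N := fun h => hg (by simpa using N.inv_mem h)
  -- conjugation fact for D inside N
  have hDconj : ∀ d ∈ D, ∀ n ∈ N, n * d * n⁻¹ ∈ D := by
    intro d hd n hn
    have := hDn.conj_mem ⟨d, hDN hd⟩ (Subgroup.mem_subgroupOf.mpr hd) ⟨n, hn⟩
    simpa [Subgroup.mem_subgroupOf] using this
  -- conjugation automorphism of N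
  have hmapN : N.map ((MulAut.conj g : G ≃* G) : G →* G) = N := by
    ext x
    simp only [Subgroup.mem_map, MulEquiv.coe_toMonoidHom, MulAut.conj_apply]
    constructor
    · rintro ⟨y, hy, rfl⟩
      exact hNn.conj_mem y hy g
    · intro hx
      refine ⟨g⁻¹ * x * g, by simpa [mul_assoc] using hNn.conj_mem x hx g⁻¹, ?_⟩
      show g * (g⁻¹ * x * g) * g⁻¹ = x
      group
  let φ : ↥N ≃* ↥N :=
    ((MulAut.conj g : G ≃* G).subgroupMap N).trans (MulEquiv.subgroupCongr hmapN)
  have hφ : ∀ y : N, ((φ y : N) : G) = g * (y : G) * g⁻¹ := fun y => rfl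
  -- the conjugated subgroup inside N
  let Dbar : Subgroup ↥N := D.subgroupOf N
  let Kbar : Subgroup ↥N := Dbar.map φ.toMonoidHom
  haveI hKn : Kbar.Normal := hDn.map φ.toMonoidHom φ.surjective
  have hφ' : ∀ y : N, ((φ.toMonoidHom y : N) : G) = g * (y : G) * g⁻¹ := fun y => rfl
  have hKi : Kbar.index = 2 ^ ℓ := by
    rw [show Kbar = Dbar.comap φ.symm.toMonoidHom from
      Subgroup.map_equiv_eq_comap_symm φ Dbar,
      Subgroup.index_comap_of_surjective _ φ.symm.surjective, hDi]
  set D'' : Subgroup ↥N := Dbar ⊓ Kbar with hD''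
  -- relative index divides 2^ℓ
  have hrel : D''.relIndex Dbar ∣ 2 ^ ℓ := by
    rw [hD'', Subgroup.inf_relIndex_left, ← hKi]
    exact Subgroup.relIndex_dvd_index_of_normal Kbar Dbar
  obtain ⟨m0, hm0, hrel2⟩ := (Nat.dvd_prime_pow Nat.prime_two).mp hrel
  have hDbari : Dbar.index = 2 ^ ℓ := hDi
  have hD''i : D''.index = 2 ^ (m0 + ℓ) := by
    rw [← Subgroup.relIndex_mul_index (inf_le_left : D'' ≤ Dbar), hrel2, hDbari, pow_add]
  -- now map back to G
  set D' : Subgroup G := D''.map N.subtype with hD'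
  have hD'sub : D'.subgroupOf N = D'' := by
    rw [hD', Subgroup.subgroupOf, Subgroup.comap_map_eq_self_of_injective N.subtype_injective]
  have hD'N : D' ≤ N := Subgroup.map_subtype_le _
  have hD'i : D'.index = 2 ^ (m0 + ℓ + 1) := by
    rw [← Subgroup.relIndex_mul_index hD'N, Subgroup.relIndex, hD'sub, hD''i, hN2, pow_succ]
  -- membership characterization
  have hmem : ∀ x : G, x ∈ D' ↔ x ∈ D ∧ g⁻¹ * x * g ∈ D := by
    intro x
    constructor
    · rintro ⟨y, ⟨h1, h2⟩, rfl⟩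
      obtain ⟨z, hz, rfl⟩ := h2
      refine ⟨Subgroup.mem_subgroupOf.mp h1, ?_⟩
      show g⁻¹ * ((φ.toMonoidHom z : N) : G) * g ∈ D
      rw [hφ' z]
      have e2 : g⁻¹ * (g * (z : G) * g⁻¹) * g = (z : G) := by group
      rw [e2]
      exact Subgroup.mem_subgroupOf.mp hz
    · rintro ⟨h1, h2⟩
      refine ⟨⟨x, hDN h1⟩, ⟨Subgroup.mem_subgroupOf.mpr h1, ?_⟩, rfl⟩
      refine ⟨⟨g⁻¹ * x * g, hDN h2⟩, Subgroup.mem_subgroupOf.mpr h2, ?_⟩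
      apply Subtype.ext
      rw [hφ']
      show g * (g⁻¹ * x * g) * g⁻¹ = x
      group
  -- normality of D'
  have hD'n : D'.Normal := by
    refine ⟨fun x hx h => ?_⟩
    rw [hmem] at hx ⊢
    obtain ⟨hxD, hxC⟩ := hx
    by_cases hh : h ∈ N
    · constructor
      · exact hDconj x hxD h hh
      · have key : g⁻¹ * (h * x * h⁻¹) * g
            = (g⁻¹ * h * g) * (g⁻¹ * x * g) * (g⁻¹ * h * g)⁻¹ := by group
        rw [key]
        have hn' : g⁻¹ * h * g ∈ N := by
          have := hNn.conj_mem h hh g⁻¹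
          simpa [mul_assoc] using this
        exact hDconj _ hxC _ hn'
    · have hhg : h * g ∈ N := hnotmul h g hh hg
      have hgh : g⁻¹ * h ∈ N := hnotmul g⁻¹ h hginv hh
      constructor
      · have key : h * x * h⁻¹ = (h * g) * (g⁻¹ * x * g) * (h * g)⁻¹ := by group
        rw [key]
        exact hDconj _ hxC _ hhg
      · have key : g⁻¹ * (h * x * h⁻¹) * g
            = (g⁻¹ * h) * x * (g⁻¹ * h)⁻¹ := by group
        rw [key]
        exact hDconj x hxD _ hgh
  -- D' ≤ D
  have hD'D : D' ≤ D := fun x hx => ((hmem x).mp hx).1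
  exact ⟨D', hD'D, hD'n, m0 + ℓ + 1, by omega, hD'i⟩

theorem stmt_7 (G : Type*) [Group G] (k : ℕ) (Γ : ℕ → Subgroup G)
    (hle : ∀ i < k, Γ (i + 1) ≤ Γ i)
    (hnorm : ∀ i < k, ((Γ (i + 1)).subgroupOf (Γ i)).Normal)
    (hidx : ∀ i < k, ((Γ (i + 1)).subgroupOf (Γ i)).index = 2) :
    ∃ Γ' : Subgroup G, Γ' ≤ Γ k ∧ Γ' ≤ Γ 0 ∧
      (Γ'.subgroupOf (Γ 0)).Normal ∧
      ∃ ℓ : ℕ, ℓ ≤ 2 ^ k - 1 ∧ (Γ'.subgroupOf (Γ 0)).index = 2 ^ ℓ := by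
  induction k generalizing Γ with
  | zero =>
    refine ⟨Γ 0, le_rfl, le_rfl, ?_, 0, le_rfl, ?_⟩
    · rw [Subgroup.subgroupOf_self]; infer_instance
    · rw [Subgroup.subgroupOf_self, Subgroup.index_top]; norm_num
  | succ k ih =>
    obtain ⟨Δ, hΔk, hΔ1, hΔn, ℓ, hℓ, hΔi⟩ :=
      ih (fun i => Γ (i + 1)) (fun i hi => hle (i + 1) (by omega))
        (fun i hi => hnorm (i + 1) (by omega)) (fun i hi => hidx (i + 1) (by omega))
    have h01 : Γ 1 ≤ Γ 0 := hle 0 (by omega)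
    set N : Subgroup ↥(Γ 0) := (Γ 1).subgroupOf (Γ 0) with hN
    haveI hNn : N.Normal := hnorm 0 (by omega)
    have hN2 : N.index = 2 := hidx 0 (by omega)
    set D : Subgroup ↥(Γ 0) := Δ.subgroupOf (Γ 0) with hD
    have hDN : D ≤ N := fun x hx =>
      Subgroup.mem_subgroupOf.mpr (hΔ1 (Subgroup.mem_subgroupOf.mp hx))
    let e : ↥N ≃* ↥(Γ 1) := Subgroup.subgroupOfEquivOfLe h01
    have hcomap : D.subgroupOf N = (Δ.subgroupOf (Γ 1)).comap (e : ↥N →* ↥(Γ 1)) := by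
      ext x
      simp [Subgroup.mem_subgroupOf, Subgroup.mem_comap, e, Subgroup.subgroupOfEquivOfLe, hD]
    have hDn : (D.subgroupOf N).Normal := by
      rw [hcomap]; exact hΔn.comap _
    have hDi : (D.subgroupOf N).index = 2 ^ ℓ := by
      rw [hcomap, Subgroup.index_comap_of_surjective _ e.surjective, hΔi]
    obtain ⟨D', hD'le, hD'n, m, hm, hD'i⟩ := core_step N D hN2 hDN hDn ℓ hDi
    have hsub : (D'.map (Γ 0).subtype).subgroupOf (Γ 0) = D' := by
      rw [Subgroup.subgroupOf, Subgroup.comap_map_eq_self_of_injective (Γ 0).subtype_injective]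
    refine ⟨D'.map (Γ 0).subtype, ?_, Subgroup.map_subtype_le _, ?_, m, ?_, ?_⟩
    · calc D'.map (Γ 0).subtype ≤ D.map (Γ 0).subtype := Subgroup.map_mono hD'le
        _ = Δ ⊓ Γ 0 := Subgroup.subgroupOf_map_subtype Δ (Γ 0)
        _ ≤ Γ (k + 1) := inf_le_left.trans hΔk
    · rw [hsub]; exact hD'n
    · have h1 : 1 ≤ 2 ^ k := Nat.one_le_two_pow
      have h2 : 2 ^ (k + 1) = 2 * 2 ^ k := by rw [pow_succ]; ring
      omega
    · rw [hsub, hD'i]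
end
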